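/- Let G be a partially directed graph on a finite vertex set V that is strictly acyclic and satisfies: whenever I→J is a directed edge and J—K is an undirected edge of G, the vertices I and K are adjacent. Let X and Y be disjoint vertex subsets such that G has no proper semi-directed path from X to Y that starts with an undirected edge. Then for every chain component τ of G with τ∩X ≠ ∅, one has (τ∖X) ∩ An_{G(↛X)}(Y) = ∅, where G(↛X) is G with all directed edges into X∩An_G(Y) removed. -/

import Mathlib

open scoped Classical

/-- A partially directed graph on vertex type `V`: directed edges `dir i j` (i→j) and
undirected edges `undir i j` (i—j), with at most one edge between any two vertices. -/
structure PDG (V : Type) where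
  dir : V → V → Prop
  undir : V → V → Prop
  undir_symm : ∀ i j, undir i j → undir j i
  undir_irrefl : ∀ i, ¬ undir i i
  dir_irrefl : ∀ i, ¬ dir i i
  not_dir_dir : ∀ i j, dir i j → ¬ dir j i
  not_dir_undir : ∀ i j, dir i j → ¬ undir i j

namespace PDG

variable {V : Type}

/-- Adjacency: joined by some edge. -/
def Adj (G : PDG V) (i j : V) : Prop := G.dir i j ∨ G.dir j i ∨ G.undir i j

/-- A semi-directed step from `i` to `j`: an undirected edge or a directed edge `i→j`. -/
def SStep (G : PDG V) (i j : V) : Prop := G.dir i j ∨ G.undir i j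

/-- Existence of a semi-directed cycle: `f 0, …, f m` with `f 0 = f m`, `m ≥ 2`,
each consecutive pair a semi-directed step, at least one step directed. -/
def HasSemiDirectedCycle (G : PDG V) : Prop :=
  ∃ (m : ℕ) (f : ℕ → V), 2 ≤ m ∧ f 0 = f m ∧
    (∀ i < m, G.SStep (f i) (f (i + 1))) ∧ (∃ i < m, G.dir (f i) (f (i + 1)))

/-- Strictly acyclic: no semi-directed cycle. -/
def StrictlyAcyclic (G : PDG V) : Prop := ¬ G.HasSemiDirectedCycle

/-- Joined by a path of undirected edges (possibly trivial). -/
def sameChain (G : PDG V) (i j : V) : Prop := Relation.ReflTransGen G.undir i j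

/-- The chain component of a vertex. -/
def chainComp (G : PDG V) (i : V) : Set V := {j | G.sameChain i j}

/-- Parents of a vertex set. -/
def Pa (G : PDG V) (D : Set V) : Set V := {i | ∃ d ∈ D, G.dir i d}

/-- Ancestors of a vertex set (directed path, possibly of length 0). -/
def An (G : PDG V) (D : Set V) : Set V := {i | ∃ d ∈ D, Relation.ReflTransGen G.dir i d}

/-- A DAG: only directed edges, and no directed cycles. -/
def IsDAG (G : PDG V) : Prop :=
  (∀ i j, ¬ G.undir i j) ∧ ∀ i, ¬ Relation.TransGen G.dir i i

/-- Unshielded collider `(i, k, j)`: `i→k ← j` with `i`, `j` distinct and non-adjacent. -/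
def UC (G : PDG V) (i k j : V) : Prop :=
  i ≠ j ∧ G.dir i k ∧ G.dir j k ∧ ¬ G.Adj i j

/-- `D ∈ [G]`: `D` is a DAG with the same skeleton as `G`, containing every directed edge
of `G`, all of whose unshielded colliders are unshielded colliders of `G`. -/
def InClass (D G : PDG V) : Prop :=
  D.IsDAG ∧ (∀ i j, D.Adj i j ↔ G.Adj i j) ∧ (∀ i j, G.dir i j → D.dir i j) ∧
    (∀ i k j, D.UC i k j → G.UC i k j)

/-- `C` is a nonempty set, connected by undirected edges within `C`, receiving a directed
edge from `I` and one from `J`. -/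
def ComplexCand (G : PDG V) (I : V) (C : Set V) (J : V) : Prop :=
  C.Nonempty ∧
  (∀ a ∈ C, ∀ b ∈ C,
    Relation.ReflTransGen (fun x y => G.undir x y ∧ x ∈ C ∧ y ∈ C) a b) ∧
  (∃ c ∈ C, G.dir I c) ∧ (∃ c ∈ C, G.dir J c)

/-- Minimal complex `(I, C, J)` of `G`. -/
def MinimalComplex (G : PDG V) (I : V) (C : Set V) (J : V) : Prop :=
  I ≠ J ∧ ¬ G.Adj I J ∧ (∀ a ∈ C, ∀ b ∈ C, G.sameChain a b) ∧
  G.ComplexCand I C J ∧ ∀ C' ⊂ C, ¬ G.ComplexCand I C' J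

/-- Remove all directed edges pointing into `S`. -/
def removeInto (G : PDG V) (S : Set V) : PDG V where
  dir i j := G.dir i j ∧ j ∉ S
  undir := G.undir
  undir_symm := G.undir_symm
  undir_irrefl := G.undir_irrefl
  dir_irrefl i h := G.dir_irrefl i h.1
  not_dir_dir i j h h' := G.not_dir_dir i j h.1 h'.1
  not_dir_undir i j h h' := G.not_dir_undir i j h.1 h'

/-- Induced subgraph on the vertex set `D` (kept on the same vertex type; edges
outside `D` are discarded). -/
def induce (G : PDG V) (D : Set V) : PDG V where
  dir i j := G.dir i j ∧ i ∈ D ∧ j ∈ D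
  undir i j := G.undir i j ∧ i ∈ D ∧ j ∈ D
  undir_symm i j h := ⟨G.undir_symm i j h.1, h.2.2, h.2.1⟩
  undir_irrefl i h := G.undir_irrefl i h.1
  dir_irrefl i h := G.dir_irrefl i h.1
  not_dir_dir i j h h' := G.not_dir_dir i j h.1 h'.1
  not_dir_undir i j h h' := G.not_dir_undir i j h.1 h'.1

/-- `G(↛X)`: `G` with every directed edge into `X ∩ An_G(Y)` removed. -/
def noInto (G : PDG V) (X Y : Set V) : PDG V := G.removeInto (X ∩ G.An Y)

/-- `RM(G; X, Y)`: the induced subgraph of `G(↛X)` on `An_{G(↛X)}(Y)`. -/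
def RM (G : PDG V) (X Y : Set V) : PDG V :=
  (G.noInto X Y).induce ((G.noInto X Y).An Y)

/-- There is a proper semi-directed path from `X` to `Y` starting with an undirected
edge: distinct vertices `f 0 ∈ X, …, f m ∈ Y`, only `f 0` in `X`, each consecutive pair a
semi-directed step, the first edge undirected. -/
def HasProperUndirStartPath (G : PDG V) (X Y : Set V) : Prop :=
  ∃ (m : ℕ) (f : ℕ → V), 1 ≤ m ∧
    (∀ i ≤ m, ∀ j ≤ m, f i = f j → i = j) ∧
    f 0 ∈ X ∧ f m ∈ Y ∧ (∀ i < m, G.SStep (f i) (f (i + 1))) ∧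
    (∀ i, 1 ≤ i → i ≤ m → f i ∉ X) ∧ G.undir (f 0) (f 1)

/-- Membership in the chain decomposition `CD_G(D)`: the nonempty intersections of `D`
with chain components of `G`. -/
def CDmem (G : PDG V) (D S : Set V) : Prop :=
  S.Nonempty ∧ ∃ i, S = D ∩ G.chainComp i

end PDG

noncomputable section Prob

open PDG

variable {V : Type} [Fintype V] [DecidableEq V] {𝒳 : V → Type} [∀ i, Fintype (𝒳 i)]
  [∀ i, Nonempty (𝒳 i)]

/-- Marginal `p_S(v_S)`: sum of `p` over configurations agreeing with `v` on `S`. -/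
def marginal (p : (∀ i, 𝒳 i) → ℝ) (S : Set V) (v : ∀ i, 𝒳 i) : ℝ :=
  ∑ w : ∀ i, 𝒳 i, if ∀ i ∈ S, w i = v i then p w else 0

/-- Conditional `p(v_A | v_S) = p_{A∪S}(v_{A∪S}) / p_S(v_S)`. -/
def condP (p : (∀ i, 𝒳 i) → ℝ) (A S : Set V) (v : ∀ i, 𝒳 i) : ℝ :=
  marginal p (A ∪ S) v / marginal p S v

/-- A strictly positive pmf. -/
def IsPositivePMF (p : (∀ i, 𝒳 i) → ℝ) : Prop :=
  (∀ v, 0 < p v) ∧ ∑ v : ∀ i, 𝒳 i, p v = 1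

/-- `p` factorizes according to the DAG `D`. -/
def FactorizesDAG (p : (∀ i, 𝒳 i) → ℝ) (D : PDG V) : Prop :=
  ∀ v, p v = ∏ i : V, condP p {i} (D.Pa {i}) v

/-- The (finitely many) chain components of `G`. -/
def chainComponents (G : PDG V) : Finset (Set V) :=
  Finset.univ.image (fun i => G.chainComp i)

/-- The outer chain-graph factorization `∏_τ p(v_τ | v_{Pa_G(τ)})` over chain
components `τ` of `G`. -/
def chainProd (G : PDG V) (p : (∀ i, 𝒳 i) → ℝ) (v : ∀ i, 𝒳 i) : ℝ :=
  ∏ τ ∈ chainComponents G, condP p τ (G.Pa τ) v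

/-- The product `∏_j p(v_{D_j} | v_{Pa_G(D_j)})` over the chain decomposition
`CD_G(D) = {D_1,…,D_k}` (empty intersections contribute a factor `1`). -/
def cdProd (G : PDG V) (p : (∀ i, 𝒳 i) → ℝ) (D : Set V) (v : ∀ i, 𝒳 i) : ℝ :=
  ∏ τ ∈ chainComponents G, condP p (D ∩ τ) (G.Pa (D ∩ τ)) v

/-- The identification formula (g-formula) of Perković's theorem:
`Σ_b ∏_j p(b_j | pa_G(B_j))` where `{B_1,…,B_k} = CD_G(An_{G_{V∖X}}(Y))`,
the sum running over configurations of `B = An_{G_{V∖X}}(Y) ∖ Y`, all other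
coordinates (in particular the intervened values on `X` and the values on `Y`)
being fixed by `v`. -/
def gFormula (G : PDG V) (p : (∀ i, 𝒳 i) → ℝ) (X Y : Set V) (v : ∀ i, 𝒳 i) : ℝ :=
  ∑ w : ∀ i, 𝒳 i,
    if ∀ i, i ∉ (G.induce Xᶜ).An Y \ Y → w i = v i then
      cdProd G p ((G.induce Xᶜ).An Y) w
    else 0

/-- The re-weighting formula `Σ_{v'} p(v) / ∏_j p(x_j | pa_G(X_j))`, where
`{X_1,…,X_m} = CD_G(X ∩ An_G(Y))` and the sum runs over configurations of
`V ∖ (X ∪ Y)`, the coordinates on `X ∪ Y` being fixed by `v`. -/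
def rwFormula (G : PDG V) (p : (∀ i, 𝒳 i) → ℝ) (X Y : Set V) (v : ∀ i, 𝒳 i) : ℝ :=
  ∑ w : ∀ i, 𝒳 i,
    if ∀ i ∈ X ∪ Y, w i = v i then p w / cdProd G p (X ∩ G.An Y) w else 0

/-- The `Y`-marginal of the truncated factorization of `p` with respect to the DAG `D`:
`Σ_{v_{V∖(X∪Y)}} ∏_{i ∈ V∖X} p(v_i | v_{Pa_D(i)})`, the coordinates on `X ∪ Y` being
fixed by `v`. -/
def truncMarg (D : PDG V) (p : (∀ i, 𝒳 i) → ℝ) (X Y : Set V) (v : ∀ i, 𝒳 i) : ℝ :=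
  ∑ w : ∀ i, 𝒳 i,
    if ∀ i ∈ X ∪ Y, w i = v i then
      ∏ i ∈ Finset.univ.filter (fun i => i ∉ X), condP p {i} (D.Pa {i}) w
    else 0

end Prob

private lemma exists_fun_of_rtg {V : Type} {r : V → V → Prop} {a b : V}
    (h : Relation.ReflTransGen r a b) :
    ∃ (n : ℕ) (f : ℕ → V), f 0 = a ∧ f n = b ∧ ∀ i < n, r (f i) (f (i + 1)) := by
  induction h with
  | refl => exact ⟨0, fun _ => a, rfl, rfl, fun i hi => absurd hi (Nat.not_lt_zero i)⟩
  | @tail c d hac hcd ih =>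
    obtain ⟨n, f, h0, hn, hs⟩ := ih
    refine ⟨n + 1, fun i => if i ≤ n then f i else d, by simp [h0], by simp, ?_⟩
    intro i hi
    by_cases hc : i + 1 ≤ n
    · simp only [if_pos (by omega : i ≤ n), if_pos hc]
      exact hs i (by omega)
    · have hin : i = n := by omega
      subst hin
      simp only [if_pos le_rfl, if_neg hc, hn]
      exact hcd

private lemma rtg_of_chain {V : Type} {r : V → V → Prop} (f : ℕ → V) (n : ℕ)
    (hs : ∀ i < n, r (f i) (f (i + 1))) :
    ∀ t ≤ n, Relation.ReflTransGen r (f t) (f n) := by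
  intro t ht
  obtain ⟨d, hd⟩ : ∃ d, t + d = n := ⟨n - t, by omega⟩
  induction d generalizing t with
  | zero => have : t = n := by omega
            subst this; exact Relation.ReflTransGen.refl
  | succ d ih =>
    exact Relation.ReflTransGen.head (hs t (by omega)) (ih (t + 1) (by omega) (by omega))

private lemma concat_fun {V : Type} (g h : ℕ → V) (k : ℕ) (hk : g k = h 0) :
    ∃ f : ℕ → V, (∀ t ≤ k, f t = g t) ∧ (∀ t, k ≤ t → f t = h (t - k)) := by
  refine ⟨fun t => if t ≤ k then g t else h (t - k), ?_, ?_⟩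
  · intro t ht; simp [ht]
  · intro t ht
    by_cases hc : t ≤ k
    · have : t = k := le_antisymm hc ht
      subst this; simp [hk]
    · simp [hc]

/-- If `G` is strictly acyclic with `I→J, J—K ⇒ I, K` adjacent and there is
no proper semi-directed path from `X` to `Y` starting with an undirected edge, then every
chain component `τ` of `G` meeting `X` satisfies `(τ∖X) ∩ An_{G(↛X)}(Y) = ∅`. -/
theorem stmt6 {V : Type} [Fintype V] (G : PDG V)
    (hSA : G.StrictlyAcyclic)
    (hMeek : ∀ I J K : V, G.dir I J → G.undir J K → G.Adj I K)
    (X Y : Set V) (hXY : Disjoint X Y)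
    (hpath : ¬ G.HasProperUndirStartPath X Y) :
    ∀ i : V, (G.chainComp i ∩ X).Nonempty →
      (G.chainComp i \ X) ∩ (G.noInto X Y).An Y = ∅ := by
  classical
  intro i hne
  by_contra hcon
  obtain ⟨v, ⟨hvC, hvX⟩, hvAn⟩ := Set.nonempty_iff_ne_empty.2 hcon
  obtain ⟨x, hxC, hxX⟩ := hne
  -- an undirected walk from x to v
  have hsym : Symmetric G.undir := fun a b hab => G.undir_symm a b hab
  have hxv : Relation.ReflTransGen G.undir x v :=
    (haveI : Std.Symm G.undir := ⟨fun a b hab => G.undir_symm a b hab⟩; (Relation.ReflTransGen.symmetric (r := G.undir)).symm _ _ hxC).trans hvC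
  obtain ⟨k, g, hg0, hgk, hgs⟩ := exists_fun_of_rtg hxv
  -- a directed walk (in G(↛X)) from v to some y ∈ Y
  obtain ⟨y, hyY, hrt⟩ := hvAn
  obtain ⟨l, h, hh0, hhl, hhs⟩ := exists_fun_of_rtg hrt
  -- the last position of the undirected walk lying in X
  set a := Nat.findGreatest (fun t => g t ∈ X) k with ha
  have haX : g a ∈ X := by
    have := Nat.findGreatest_spec (P := fun t => g t ∈ X) (Nat.zero_le k)
      (show g 0 ∈ X by rw [hg0]; exact hxX)
    simpa [ha] using this
  have hak : a ≤ k := Nat.findGreatest_le (P := fun t => g t ∈ X) k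
  have halt : a < k := lt_of_le_of_ne hak (by
    intro e; exact hvX (by rw [← hgk, ← e]; exact haX))
  have hnot : ∀ t, a < t → t ≤ k → g t ∉ X := fun t h1 h2 =>
    Nat.findGreatest_is_greatest (P := fun t => g t ∈ X) h1 h2
  -- the directed walk avoids X
  have hhAn : ∀ t ≤ l, h t ∈ G.An Y := by
    intro t ht
    exact ⟨y, hyY, by
      rw [← hhl]
      exact rtg_of_chain h l (fun s hs => (hhs s hs).1) t ht⟩
  have hhX : ∀ t ≤ l, h t ∉ X := by
    intro t ht hX
    rcases Nat.eq_zero_or_pos t with ht0 | ht1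
    · subst ht0; rw [hh0] at hX; exact hvX hX
    · have := (hhs (t - 1) (by omega)).2
      have hidx : t - 1 + 1 = t := by omega
      rw [hidx] at this
      exact this ⟨hX, hhAn t ht⟩
  -- the walk predicate
  set P : ℕ → Prop := fun m => ∃ f : ℕ → V, 1 ≤ m ∧ f 0 ∈ X ∧ f m ∈ Y ∧
      (∀ t < m, G.SStep (f t) (f (t + 1))) ∧
      (∀ t, 1 ≤ t → t ≤ m → f t ∉ X) ∧ G.undir (f 0) (f 1) with hP
  -- existence of a walk: concatenate the two pieces
  have hex : ∃ m, P m := by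
    obtain ⟨f, hf1, hf2⟩ := concat_fun (fun t => g (a + t)) h (k - a)
      (by simp only [Nat.add_sub_cancel' hak, hgk, hh0])
    refine ⟨(k - a) + l, f, by omega, ?_, ?_, ?_, ?_, ?_⟩
    · rw [hf1 0 (Nat.zero_le _)]; exact haX
    · rw [hf2 ((k - a) + l) (by omega)]
      have : (k - a) + l - (k - a) = l := by omega
      rw [this, hhl]; exact hyY
    · intro t htm
      by_cases hc : t + 1 ≤ k - a
      · rw [hf1 t (by omega), hf1 (t + 1) hc]
        exact Or.inr (hgs (a + t) (by omega))
      · rw [hf2 t (by omega), hf2 (t + 1) (by omega)]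
        have hidx : t + 1 - (k - a) = (t - (k - a)) + 1 := by omega
        rw [hidx]
        exact Or.inl (hhs (t - (k - a)) (by omega)).1
    · intro t ht1 htm
      by_cases hc : t ≤ k - a
      · rw [hf1 t hc]
        exact hnot (a + t) (by omega) (by omega)
      · rw [hf2 t (by omega)]
        exact hhX (t - (k - a)) (by omega)
    · rw [hf1 0 (Nat.zero_le _), hf1 1 (by omega)]
      exact hgs a halt
  -- take a minimal walk
  obtain ⟨f, hm1, hfX, hfY, hfs, hfnX, hfu⟩ := Nat.find_spec hex
  set m := Nat.find hex with hm
  -- minimality gives injectivity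
  have key : ∀ s t, s < t → t ≤ m → f s = f t → False := by
    intro s t hst htm heq
    have hs1 : 1 ≤ s := by
      by_contra h0
      have hs0 : s = 0 := by omega
      subst hs0
      exact hfnX t (by omega) htm (heq ▸ hfX)
    have hshort : P (m - (t - s)) := by
      refine ⟨fun u => if u ≤ s then f u else f (u + (t - s)), by omega, ?_, ?_, ?_, ?_, ?_⟩
      · simp only [if_pos (Nat.zero_le s)]; exact hfX
      · beta_reduce
        split_ifs with hc
        · have h1 : m - (t - s) = s := by omega
          have h2 : t = m := by omega
          rw [h1, heq, h2]; exact hfY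
        · have : m - (t - s) + (t - s) = m := by omega
          rw [this]; exact hfY
      · intro u hu
        by_cases hc0 : u + 1 ≤ s
        · simp only [if_pos (by omega : u ≤ s), if_pos hc0]
          exact hfs u (by omega)
        · by_cases hc1 : u ≤ s
          · have hus : u = s := by omega
            subst hus
            simp only [if_pos le_rfl, if_neg hc0, heq]
            have : u + 1 + (t - u) = t + 1 := by omega
            rw [this]
            exact hfs t (by omega)
          · simp only [if_neg hc1, if_neg (by omega : ¬ u + 1 ≤ s)]
            have : u + 1 + (t - s) = u + (t - s) + 1 := by omega
            rw [this]
            exact hfs (u + (t - s)) (by omega)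
      · intro u hu1 hum
        by_cases hc : u ≤ s
        · simp only [if_pos hc]
          exact hfnX u hu1 (by omega)
        · simp only [if_neg hc]
          exact hfnX (u + (t - s)) (by omega) (by omega)
      · simp only [if_pos (Nat.zero_le s), if_pos hs1]
        exact hfu
    exact Nat.find_min hex (by omega : m - (t - s) < Nat.find hex) hshort
  have hinj : ∀ s ≤ m, ∀ t ≤ m, f s = f t → s = t := by
    intro s hs t ht heq
    rcases lt_trichotomy s t with hlt | heqst | hgt
    · exact absurd heq (fun e => key s t hlt ht e)
    · exact heqst
    · exact absurd heq.symm (fun e => key t s hgt hs e)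
  exact hpath ⟨m, f, hm1, hinj, hfX, hfY, hfs, hfnX, hfu⟩
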